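/- Let κ be strongly inaccessible and θ < κ regular, and let Q = Levy(θ,<κ). Assume p ∈ Q, S is a stationary subset of κ consisting of ordinals of cofinality at least θ, and (q_α)_{α∈S} is a family of conditions in Q with q_α ≤ p for every α ∈ S. Then there exist β < κ, a condition q ∈ Q with dom(q) ⊆ β × θ, and a stationary S' ⊆ S, such that q ≤ p and π_α(q_α) = q for all α ∈ S'. -/

import Mathlib

open Set

noncomputable section

namespace BMPDGames

/-- `I` is an ideal on the (regular uncountable) ordinal `κ`:  a collection of subsets of
`κ` containing all singletons, closed under subsets and finite unions, with `κ ∉ I`. -/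
def IsIdealOn (κ : Ordinal) (I : Set (Set Ordinal)) : Prop :=
  (∀ A ∈ I, A ⊆ Set.Iio κ) ∧
  (∀ β < κ, ({β} : Set Ordinal) ∈ I) ∧
  (∀ A B : Set Ordinal, A ⊆ B → B ∈ I → A ∈ I) ∧
  (∀ A ∈ I, ∀ B ∈ I, A ∪ B ∈ I) ∧
  Set.Iio κ ∉ I

/-- `I` is fine: every bounded subset of `κ` belongs to `I`. -/
def IsFineIdeal (κ : Ordinal) (I : Set (Set Ordinal)) : Prop :=
  ∀ A : Set Ordinal, A ⊆ Set.Iio κ → (∃ β < κ, A ⊆ Set.Iio β) → A ∈ I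

/-- `I` is normal: the diagonal union of `κ` many members of `I` belongs to `I`. -/
def IsNormalIdeal (κ : Ordinal) (I : Set (Set Ordinal)) : Prop :=
  ∀ A : Ordinal → Set Ordinal, (∀ γ, γ < κ → A γ ∈ I) →
    {β : Ordinal | β < κ ∧ ∃ γ < β, β ∈ A γ} ∈ I

/-- `I` is a fine normal ideal on `κ`. -/
def FineNormalIdeal (κ : Ordinal) (I : Set (Set Ordinal)) : Prop :=
  IsIdealOn κ I ∧ IsFineIdeal κ I ∧ IsNormalIdeal κ I

/-- `κ` is (as an ordinal) a regular uncountable cardinal. -/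
def RegUncountable (κ : Ordinal) : Prop :=
  κ.card.IsRegular ∧ Cardinal.aleph0 < κ.card ∧ κ.card.ord = κ

/-- `C` is a club (closed unbounded) subset of `κ`: it is closed under suprema of its
bounded nonempty subsets and unbounded in `κ`. -/
def IsClubIn (κ : Ordinal) (C : Set Ordinal) : Prop :=
  C ⊆ Set.Iio κ ∧
  (∀ D : Set Ordinal, D ⊆ C → D.Nonempty → sSup D < κ → sSup D ∈ C) ∧
  (∀ β, β < κ → ∃ γ ∈ C, β < γ)

/-- `S` is a stationary subset of `κ`: it meets every club. -/
def IsStationaryIn (κ : Ordinal) (S : Set Ordinal) : Prop :=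
  S ⊆ Set.Iio κ ∧ ∀ C : Set Ordinal, IsClubIn κ C → (S ∩ C).Nonempty

/-- The nonstationary ideal on `κ`: subsets of `κ` disjoint from some club. -/
def NSIdeal (κ : Ordinal) : Set (Set Ordinal) :=
  {A | A ⊆ Set.Iio κ ∧ ∃ C : Set Ordinal, IsClubIn κ C ∧ A ∩ C = ∅}

/-- `E^κ_ω`, the set of ordinals below `κ` of cofinality `ω`. -/
def Ecofomega (κ : Ordinal) : Set Ordinal :=
  {α : Ordinal | α < κ ∧ Ordinal.cof α = Cardinal.aleph0}

/-- The intersection of the values `T β` for `β < α`. -/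
def InterBelow (T : Ordinal → Set Ordinal) (α : Ordinal) : Set Ordinal :=
  ⋂ β ∈ Set.Iio α, T β

/-! ### The Banach–Mazur game `BM_{<ζ}(I,S)` (empty moves first at every stage).

A strategy for a player is represented as a function giving that player's move at stage `α`
as a function of the opponent's moves (it may only depend on the moves made before the
player's move at stage `α`, which is the first conjunct in each definition below).  A
strategy is winning if it always produces legal moves (as long as the opponent has played
legally and the game is not yet over) and every run in which the opponent plays legally is
won by the player. -/

/-- `σ` is a winning strategy for the player *empty* in `BM_{<ζ}(I,S)`.
Here `T : Ordinal → Set Ordinal` ranges over the sequences of moves of nonempty, and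
empty's move at stage `α` is `σ α T`. Empty wins a run iff at some stage `α < ζ`
the intersection of all moves made before stage `α` belongs to `I`. -/
def EmptyBMStratWins (ζ : Ordinal) (I : Set (Set Ordinal)) (S : Set Ordinal)
    (σ : Ordinal → (Ordinal → Set Ordinal) → Set Ordinal) : Prop :=
  (∀ (α : Ordinal) (T T' : Ordinal → Set Ordinal),
      (∀ β < α, T β = T' β) → σ α T = σ α T') ∧
  ∀ T : Ordinal → Set Ordinal,
    (∀ α < ζ, (∀ β < α, T β ∉ I ∧ T β ⊆ σ β T) → InterBelow T α ∉ I →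
      σ α T ∉ I ∧ σ α T ⊆ S ∧ ∀ β < α, σ α T ⊆ T β) ∧
    ((∀ α < ζ, T α ∉ I ∧ T α ⊆ σ α T) → ∃ α < ζ, InterBelow T α ∈ I)

/-- Empty has a winning strategy in `BM_{<ζ}(I,S)`. -/
def EmptyWinsBM (ζ : Ordinal) (I : Set (Set Ordinal)) (S : Set Ordinal) : Prop :=
  ∃ σ, EmptyBMStratWins ζ I S σ

/-- Nonempty has a winning strategy in `BM_{<ζ}(I,S)`.
Here `Sq : Ordinal → Set Ordinal` ranges over the sequences of moves of empty, and
nonempty's move at stage `α` is `τ α Sq`.  The strategy must respond legally to legal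
play by empty, and guarantee that empty is never stuck, i.e. that the intersection of
all previous moves never lies in `I` at any stage `α < ζ`. -/
def NonemptyWinsBM (ζ : Ordinal) (I : Set (Set Ordinal)) (S : Set Ordinal) : Prop :=
  ∃ τ : Ordinal → (Ordinal → Set Ordinal) → Set Ordinal,
    (∀ (α : Ordinal) (Sq Sq' : Ordinal → Set Ordinal),
        (∀ β ≤ α, Sq β = Sq' β) → τ α Sq = τ α Sq') ∧
    ∀ Sq : Ordinal → Set Ordinal, ∀ α, α < ζ →
      ((∀ β ≤ α, Sq β ∉ I ∧ Sq β ⊆ S ∧ ∀ γ < β, Sq β ⊆ Sq γ ∩ τ γ Sq) →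
        τ α Sq ∉ I ∧ τ α Sq ⊆ Sq α) ∧
      ((∀ β < α, Sq β ∉ I ∧ Sq β ⊆ S ∧ ∀ γ < β, Sq β ⊆ Sq γ ∩ τ γ Sq) →
        InterBelow (fun β => Sq β ∩ τ β Sq) α ∉ I)

/-! ### The variant `BM'_{<ζ}(I,S)` in which nonempty makes the first move at stage `0`
(playing an `I`-positive `T 0 ⊆ S`), after which play continues as in `BM` with empty
moving first at every later stage. -/

/-- `σ` is a winning strategy for empty in `BM'_{<ζ}(I,S)` (`σ` is only used at
stages `α > 0`, since nonempty alone moves at stage `0`). -/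
def EmptyBMPrimeStratWins (ζ : Ordinal) (I : Set (Set Ordinal)) (S : Set Ordinal)
    (σ : Ordinal → (Ordinal → Set Ordinal) → Set Ordinal) : Prop :=
  (∀ (α : Ordinal) (T T' : Ordinal → Set Ordinal),
      (∀ β < α, T β = T' β) → σ α T = σ α T') ∧
  ∀ T : Ordinal → Set Ordinal,
    (∀ α, 0 < α → α < ζ → (T 0 ∉ I ∧ T 0 ⊆ S) →
      (∀ β, 0 < β → β < α → T β ∉ I ∧ T β ⊆ σ β T) → InterBelow T α ∉ I →
      σ α T ∉ I ∧ ∀ β < α, σ α T ⊆ T β) ∧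
    ((0 < ζ → T 0 ∉ I ∧ T 0 ⊆ S) → (∀ α, 0 < α → α < ζ → T α ∉ I ∧ T α ⊆ σ α T) →
      ∃ α < ζ, InterBelow T α ∈ I)

/-- Empty has a winning strategy in `BM'_{<ζ}(I,S)`. -/
def EmptyWinsBMPrime (ζ : Ordinal) (I : Set (Set Ordinal)) (S : Set Ordinal) : Prop :=
  ∃ σ, EmptyBMPrimeStratWins ζ I S σ

/-- Nonempty has a winning strategy in `BM'_{<ζ}(I,S)`: a first move `T0` (an
`I`-positive subset of `S`, provided the game has any stage at all) together with
responses `τ α Sq` to empty's moves `Sq β` (`0 < β ≤ α`) at all later stages `α`. -/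
def NonemptyWinsBMPrime (ζ : Ordinal) (I : Set (Set Ordinal)) (S : Set Ordinal) : Prop :=
  ∃ T0 : Set Ordinal, ∃ τ : Ordinal → (Ordinal → Set Ordinal) → Set Ordinal,
    (0 < ζ → T0 ∉ I ∧ T0 ⊆ S) ∧
    (∀ (α : Ordinal) (Sq Sq' : Ordinal → Set Ordinal),
        (∀ β ≤ α, Sq β = Sq' β) → τ α Sq = τ α Sq') ∧
    ∀ Sq : Ordinal → Set Ordinal, ∀ α, 0 < α → α < ζ →
      ((∀ β, 0 < β → β ≤ α →
          Sq β ∉ I ∧ Sq β ⊆ T0 ∧ ∀ γ, 0 < γ → γ < β → Sq β ⊆ Sq γ ∩ τ γ Sq) →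
        τ α Sq ∉ I ∧ τ α Sq ⊆ Sq α) ∧
      ((∀ β, 0 < β → β < α →
          Sq β ∉ I ∧ Sq β ⊆ T0 ∧ ∀ γ, 0 < γ → γ < β → Sq β ⊆ Sq γ ∩ τ γ Sq) →
        (T0 ∩ ⋂ β ∈ Set.Ioo (0 : Ordinal) α, (Sq β ∩ τ β Sq)) ∉ I)

/-! ### The pressing down game `PD_{<ζ}(I,S)`.

At each stage `α < ζ` empty plays a regressive function `f_α : κ → κ` and nonempty plays
a set `T_α ⊆ S` contained in all previous `T_β` on which `f_α` is constant.  Empty wins a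
run iff `T_α ∈ I` for some `α < ζ`. -/

/-- Empty has a winning strategy in `PD_{<ζ}(I,S)`: a (history-dependent) choice of
regressive functions such that in every run in which nonempty plays legally, some move
of nonempty lies in `I`. -/
def EmptyWinsPD (ζ : Ordinal) (I : Set (Set Ordinal)) (S : Set Ordinal) : Prop :=
  ∃ σ : Ordinal → (Ordinal → Set Ordinal) → (Ordinal → Ordinal),
    (∀ (α : Ordinal) (T T' : Ordinal → Set Ordinal),
        (∀ β < α, T β = T' β) → σ α T = σ α T') ∧
    (∀ (α : Ordinal) (T : Ordinal → Set Ordinal) (β : Ordinal), 0 < β → σ α T β < β) ∧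
    ∀ T : Ordinal → Set Ordinal,
      (∀ α, α < ζ →
        T α ⊆ S ∧ (∀ β < α, T α ⊆ T β) ∧ ∃ c, ∀ x ∈ T α, σ α T x = c) →
      ∃ α, α < ζ ∧ T α ∈ I

/-- Nonempty has a winning strategy in `PD_{<ζ}(I,S)`: responses `τ α g` to the
sequence `g` of regressive functions played by empty, which are always legal
(homogeneous subsets of `S` and of all previous responses) and never lie in `I`. -/
def NonemptyWinsPD (ζ : Ordinal) (I : Set (Set Ordinal)) (S : Set Ordinal) : Prop :=
  ∃ τ : Ordinal → (Ordinal → (Ordinal → Ordinal)) → Set Ordinal,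
    (∀ (α : Ordinal) (g g' : Ordinal → (Ordinal → Ordinal)),
        (∀ β ≤ α, g β = g' β) → τ α g = τ α g') ∧
    ∀ g : Ordinal → (Ordinal → Ordinal), (∀ α β, 0 < β → g α β < β) →
      ∀ α, α < ζ →
        τ α g ⊆ S ∧ (∀ β < α, τ α g ⊆ τ β g) ∧ (∃ c, ∀ x ∈ τ α g, g α x = c) ∧
        τ α g ∉ I

/-! ### The games of length `ω + 1` on `κ`: `BM_{≤ω}(I,S)` and the ideal game.

In `BM_{≤ω}(I,S)` the players move at the finite stages `n < ω` and empty wins a run iff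
`⋂_{n<ω} S_n ∈ I`; in the ideal game (played on `κ` itself) empty wins iff
`⋂_{n<ω} S_n = ∅`. -/

/-- `σ` is a winning strategy for empty in `BM_{≤ω}(I,S)`. -/
def EmptyBMOmegaStratWins (I : Set (Set Ordinal)) (S : Set Ordinal)
    (σ : ℕ → (ℕ → Set Ordinal) → Set Ordinal) : Prop :=
  (∀ (n : ℕ) (T T' : ℕ → Set Ordinal), (∀ m < n, T m = T' m) → σ n T = σ n T') ∧
  ∀ T : ℕ → Set Ordinal,
    (∀ n, (∀ m < n, T m ∉ I ∧ T m ⊆ σ m T) →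
      σ n T ∉ I ∧ σ n T ⊆ S ∧ ∀ m < n, σ n T ⊆ T m) ∧
    ((∀ n, T n ∉ I ∧ T n ⊆ σ n T) → (⋂ n, σ n T) ∈ I)

/-- Empty has a winning strategy in `BM_{≤ω}(I,S)`. -/
def EmptyWinsBMOmega (I : Set (Set Ordinal)) (S : Set Ordinal) : Prop :=
  ∃ σ, EmptyBMOmegaStratWins I S σ

/-- Nonempty has a winning strategy in `BM_{≤ω}(I,S)`. -/
def NonemptyWinsBMOmega (I : Set (Set Ordinal)) (S : Set Ordinal) : Prop :=
  ∃ τ : ℕ → (ℕ → Set Ordinal) → Set Ordinal,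
    (∀ (n : ℕ) (Sq Sq' : ℕ → Set Ordinal), (∀ m ≤ n, Sq m = Sq' m) → τ n Sq = τ n Sq') ∧
    ∀ Sq : ℕ → Set Ordinal,
      (∀ n, (∀ m ≤ n, Sq m ∉ I ∧ Sq m ⊆ S ∧ ∀ k < m, Sq m ⊆ Sq k ∩ τ k Sq) →
        τ n Sq ∉ I ∧ τ n Sq ⊆ Sq n) ∧
      ((∀ n, Sq n ∉ I ∧ Sq n ⊆ S ∧ ∀ k < n, Sq n ⊆ Sq k ∩ τ k Sq) →
        (⋂ n, Sq n) ∉ I)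

/-- Empty has a winning strategy in the ideal game on `I` (played on `κ`). -/
def EmptyWinsIdealGame (κ : Ordinal) (I : Set (Set Ordinal)) : Prop :=
  ∃ σ : ℕ → (ℕ → Set Ordinal) → Set Ordinal,
    (∀ (n : ℕ) (T T' : ℕ → Set Ordinal), (∀ m < n, T m = T' m) → σ n T = σ n T') ∧
    ∀ T : ℕ → Set Ordinal,
      (∀ n, (∀ m < n, T m ∉ I ∧ T m ⊆ σ m T) →
        σ n T ∉ I ∧ σ n T ⊆ Set.Iio κ ∧ ∀ m < n, σ n T ⊆ T m) ∧
      ((∀ n, T n ∉ I ∧ T n ⊆ σ n T) → (⋂ n, σ n T) = ∅)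

/-- Nonempty has a winning strategy in the ideal game on `I` (played on `κ`). -/
def NonemptyWinsIdealGame (κ : Ordinal) (I : Set (Set Ordinal)) : Prop :=
  ∃ τ : ℕ → (ℕ → Set Ordinal) → Set Ordinal,
    (∀ (n : ℕ) (Sq Sq' : ℕ → Set Ordinal), (∀ m ≤ n, Sq m = Sq' m) → τ n Sq = τ n Sq') ∧
    ∀ Sq : ℕ → Set Ordinal,
      (∀ n, (∀ m ≤ n, Sq m ∉ I ∧ Sq m ⊆ Set.Iio κ ∧ ∀ k < m, Sq m ⊆ Sq k ∩ τ k Sq) →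
        τ n Sq ∉ I ∧ τ n Sq ⊆ Sq n) ∧
      ((∀ n, Sq n ∉ I ∧ Sq n ⊆ Set.Iio κ ∧ ∀ k < n, Sq n ⊆ Sq k ∩ τ k Sq) →
        (⋂ n, Sq n).Nonempty)

/-- A condition of the Levy collapse `Levy(θ, <κ)`: a partial function on `κ × θ` of
size `< θ` with `q(α,ξ) < α` for `α > 1` and `q(α,ξ) = 0` for `α ∈ {0,1}`. -/
structure LevyCond (κ θ : Ordinal.{0}) where
  f : Ordinal.{0} × Ordinal.{0} → Option Ordinal.{0}
  dom_lt : ∀ x : Ordinal.{0} × Ordinal.{0}, f x ≠ none → x.1 < κ ∧ x.2 < θ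
  dom_small :
    Cardinal.mk {x : Ordinal.{0} × Ordinal.{0} // f x ≠ none} < Cardinal.lift.{1, 0} θ.card
  val_lt : ∀ (x : Ordinal.{0} × Ordinal.{0}) (v : Ordinal.{0}),
    f x = some v → 1 < x.1 → v < x.1
  val_zero : ∀ (x : Ordinal.{0} × Ordinal.{0}) (v : Ordinal.{0}),
    f x = some v → x.1 ≤ 1 → v = 0

/-- `q ≤ p` in the Levy collapse: `q` extends `p` as a partial function. -/
def LevyLE {κ θ : Ordinal.{0}} (q p : LevyCond κ θ) : Prop :=
  ∀ (x : Ordinal.{0} × Ordinal.{0}) (v : Ordinal.{0}), p.f x = some v → q.f x = some v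

/-- `π_α(q) = q ↾ (α × θ)`, the restriction of a Levy condition below `α`. -/
def levyRestrict {κ θ : Ordinal.{0}} (α : Ordinal.{0}) (q : LevyCond κ θ) :
    Ordinal.{0} × Ordinal.{0} → Option Ordinal.{0} :=
  fun x => if x.1 < α then q.f x else none


/-! ### Auxiliary lemmas -/

private lemma sSup_lt_of_card_lt_cof {α : Ordinal.{0}} {B : Set Ordinal.{0}}
    (hB : ∀ b ∈ B, b < α) (hc : Cardinal.mk B < Cardinal.lift.{1,0} (Ordinal.cof α)) :
    sSup B < α := by
  have hα : (0:Ordinal) < α := by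
    rcases eq_zero_or_pos α with rfl | h
    · rw [Ordinal.cof_zero] at hc; simp at hc
    · exact h
  rcases Set.eq_empty_or_nonempty B with rfl | hne
  · simpa using hα
  · haveI : Small.{0} ↥B :=
      @small_subset _ (Set.Iio α) B (fun b hb => hB b hb) (Ordinal.small_Iio α)
    have hcard : Cardinal.mk (Shrink.{0} ↥B) < Ordinal.cof α := by
      have h1 := Cardinal.lift_mk_shrink' ↥B
      rw [Cardinal.lift_id'] at h1
      have h2 : Cardinal.lift.{1} (Cardinal.mk (Shrink.{0} ↥B))
          < Cardinal.lift.{1} (Ordinal.cof α) := by rw [h1]; exact hc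
      exact Cardinal.lift_lt.mp h2
    have hsup : (⨆ i : Shrink.{0} ↥B, (((equivShrink ↥B).symm i : ↥B) : Ordinal)) < α :=
      Ordinal.iSup_lt_ord hcard fun i => hB _ ((equivShrink ↥B).symm i).2
    refine lt_of_le_of_lt (csSup_le hne fun b hb => ?_) hsup
    have h1 : (((equivShrink ↥B).symm (equivShrink ↥B ⟨b, hb⟩) : ↥B) : Ordinal) = b := by simp
    rw [← h1]
    exact le_ciSup Ordinal.bddAbove_of_small _

private lemma clubIio {κ : Ordinal.{0}} (hlim : Order.IsSuccLimit κ) : IsClubIn κ (Set.Iio κ) := by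
  refine ⟨subset_rfl, fun D _ _ hlt => hlt, fun β hβ => ⟨β + 1, ?_, ?_⟩⟩
  · rw [Ordinal.add_one_eq_succ]; exact hlim.succ_lt hβ
  · rw [Ordinal.add_one_eq_succ]; exact Order.lt_succ β

private lemma stat_nonempty {κ : Ordinal.{0}} (hlim : Order.IsSuccLimit κ) {S : Set Ordinal}
    (hS : IsStationaryIn κ S) : ∃ α, α ∈ S := by
  obtain ⟨x, hx, _⟩ := hS.2 _ (clubIio hlim); exact ⟨x, hx⟩

private lemma stat_Ioi {κ : Ordinal.{0}} {S : Set Ordinal} (hS : IsStationaryIn κ S)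
    {ξ : Ordinal} (hξ : ξ < κ) : IsStationaryIn κ (S ∩ Set.Ioi ξ) := by
  constructor
  · exact fun x hx => hS.1 hx.1
  · intro C hC
    have hC' : IsClubIn κ (C ∩ Set.Ioi ξ) := by
      refine ⟨fun x hx => hC.1 hx.1, ?_, ?_⟩
      · intro D hD hne hlt
        refine ⟨hC.2.1 D (fun d hd => (hD hd).1) hne hlt, ?_⟩
        obtain ⟨d, hd⟩ := hne
        exact lt_of_lt_of_le (hD hd).2
          (le_csSup ⟨κ, fun b hb => (hC.1 (hD hb).1).le⟩ hd)
      · intro β hβ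
        obtain ⟨γ, hγC, hγ⟩ := hC.2.2 (max β ξ) (max_lt hβ hξ)
        exact ⟨γ, ⟨hγC, lt_of_le_of_lt (le_max_right _ _) hγ⟩,
          lt_of_le_of_lt (le_max_left _ _) hγ⟩
    obtain ⟨x, hxS, hxC, hxI⟩ := hS.2 _ hC'
    exact ⟨x, ⟨hxS, hxI⟩, hxC⟩

private lemma fodor {κ : Ordinal.{0}} (hreg : κ.card.IsRegular)
    (hunc : Cardinal.aleph0 < κ.card) (hord : κ.card.ord = κ)
    {S : Set Ordinal.{0}} (hS : IsStationaryIn κ S)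
    (f : Ordinal.{0} → Ordinal.{0}) (hf : ∀ α ∈ S, f α < α) :
    ∃ γ, IsStationaryIn κ {α | α ∈ S ∧ f α = γ} := by
  classical
  have hlim : Order.IsSuccLimit κ := by rw [← hord]; exact Cardinal.isSuccLimit_ord hreg.aleph0_le
  have hcof : κ.cof = κ.card := by
    conv_lhs => rw [← hord]
    exact hreg.cof_eq
  by_contra hcon
  push_neg at hcon
  have hex : ∀ γ : Ordinal, ∃ C, IsClubIn κ C ∧ ∀ x, x ∈ S → f x = γ → x ∉ C := by
    intro γ
    have h1 := hcon γ
    rw [IsStationaryIn, not_and] at h1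
    have h2 := h1 (fun x hx => hS.1 hx.1)
    push_neg at h2
    obtain ⟨C, hC, hCe⟩ := h2
    refine ⟨C, hC, fun x hx hfx hxC => ?_⟩
    exact Set.eq_empty_iff_forall_notMem.1 hCe x ⟨⟨hx, hfx⟩, hxC⟩
  choose C hC hCne using hex
  have hnxt : ∀ γ y, y < κ → ∃ z, z ∈ C γ ∧ y < z := by
    intro γ y hy
    obtain ⟨z, hz1, hz2⟩ := (hC γ).2.2 y hy
    exact ⟨z, hz1, hz2⟩
  set nxt : Ordinal → Ordinal → Ordinal := fun γ y =>
    if h : y < κ then (hnxt γ y h).choose else 0 with hnxtdef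
  have hnxt_mem : ∀ γ y, y < κ → nxt γ y ∈ C γ := by
    intro γ y h
    simp only [hnxtdef, dif_pos h]
    exact (hnxt γ y h).choose_spec.1
  have hnxt_gt : ∀ γ y, y < κ → y < nxt γ y := by
    intro γ y h
    simp only [hnxtdef, dif_pos h]
    exact (hnxt γ y h).choose_spec.2
  have hnxt_lt : ∀ γ y, y < κ → nxt γ y < κ := fun γ y h => (hC γ).1 (hnxt_mem γ y h)
  set stp : Ordinal → Ordinal := fun y =>
    max (y + 1) (sSup ((fun γ => nxt γ y) '' Set.Iio y)) with hstpdef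
  have hstp_lt : ∀ y, y < κ → stp y < κ := by
    intro y hy
    refine max_lt (by rw [Ordinal.add_one_eq_succ]; exact hlim.succ_lt hy) ?_
    refine sSup_lt_of_card_lt_cof ?_ ?_
    · rintro b ⟨γ, _, rfl⟩; exact hnxt_lt γ y hy
    · refine lt_of_le_of_lt Cardinal.mk_image_le ?_
      rw [Ordinal.mk_Iio_ordinal, hcof]
      exact Cardinal.lift_lt.2 (Cardinal.lt_ord.1 (by rw [hord]; exact hy))
  have hstp_gt : ∀ y, y < stp y := fun y =>
    lt_of_lt_of_le (by rw [Ordinal.add_one_eq_succ]; exact Order.lt_succ y) (le_max_left _ _)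
  have hstp_nxt : ∀ γ y, γ < y → y < κ → nxt γ y ≤ stp y := by
    intro γ y hγ hy
    have hbdd : BddAbove ((fun γ => nxt γ y) '' Set.Iio γ ∪ (fun γ => nxt γ y) '' Set.Iio y) :=
      ⟨κ, by rintro b (⟨γ', _, rfl⟩ | ⟨γ', _, rfl⟩) <;> exact (hnxt_lt γ' y hy).le⟩
    refine le_trans (le_csSup (hbdd.mono Set.subset_union_right)
      (Set.mem_image_of_mem _ hγ)) (le_max_right _ _)
  set Δ : Set Ordinal := {x | x < κ ∧ ∀ γ < x, x ∈ C γ} with hΔdef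
  have hΔclosed : ∀ D : Set Ordinal, D ⊆ Δ → D.Nonempty → sSup D < κ → sSup D ∈ Δ := by
    intro D hD hne hlt
    refine ⟨hlt, fun γ hγ => ?_⟩
    have hbdd : BddAbove D := ⟨κ, fun d hd => ((hD hd).1).le⟩
    have hne' : (D ∩ Set.Ioi γ).Nonempty := by
      by_contra hcon2
      have hle : sSup D ≤ γ := csSup_le hne fun d hd => by
        by_contra hdg
        push_neg at hdg
        exact hcon2 ⟨d, hd, hdg⟩
      exact absurd hγ hle.not_gt
    have hsup_eq : sSup (D ∩ Set.Ioi γ) = sSup D := by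
      apply le_antisymm
      · exact csSup_le_csSup hbdd hne' Set.inter_subset_left
      · refine csSup_le hne fun d hd => ?_
        rcases le_or_gt d γ with h | h
        · obtain ⟨d', hd'⟩ := hne'
          exact le_trans (le_trans h hd'.2.le)
            (le_csSup ⟨κ, fun x hx => ((hD hx.1).1).le⟩ hd')
        · exact le_csSup ⟨κ, fun x hx => ((hD hx.1).1).le⟩ ⟨hd, h⟩
    have hsub : D ∩ Set.Ioi γ ⊆ C γ := fun d hd => (hD hd.1).2 γ hd.2
    have hmem := (hC γ).2.1 _ hsub hne' (by rw [hsup_eq]; exact hlt)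
    rwa [hsup_eq] at hmem
  have hΔunb : ∀ β, β < κ → ∃ s ∈ Δ, β < s := by
    intro β hβ
    set g : ℕ → Ordinal := fun n => Nat.rec (β + 1) (fun _ y => stp y) n with hgdef
    have hg0 : g 0 = β + 1 := rfl
    have hgs : ∀ n, g (n + 1) = stp (g n) := fun n => rfl
    have hglt : ∀ n, g n < κ := by
      intro n
      induction n with
      | zero => rw [hg0, Ordinal.add_one_eq_succ]; exact hlim.succ_lt hβ
      | succ n ih => rw [hgs]; exact hstp_lt _ ih
    have hgmono : ∀ m n : ℕ, m < n → g m < g n := by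
      intro m n h
      induction n with
      | zero => omega
      | succ n ih =>
        rcases Nat.lt_succ_iff_lt_or_eq.1 h with h' | h'
        · exact lt_trans (ih h') (by rw [hgs]; exact hstp_gt _)
        · subst h'; rw [hgs]; exact hstp_gt _
    have hgmono' : ∀ m n : ℕ, m ≤ n → g m ≤ g n := by
      intro m n h
      rcases Nat.lt_or_ge m n with h' | h'
      · exact (hgmono m n h').le
      · have : m = n := le_antisymm h h'
        rw [this]
    have hbddg : BddAbove (Set.range g) := ⟨κ, by rintro x ⟨n, rfl⟩; exact (hglt n).le⟩
    have hsκ : sSup (Set.range g) < κ := by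
      refine sSup_lt_of_card_lt_cof (by rintro x ⟨n, rfl⟩; exact hglt n) ?_
      have h1 := Cardinal.mk_range_le_lift (f := g)
      rw [Cardinal.lift_id'] at h1
      refine lt_of_le_of_lt h1 ?_
      rw [Cardinal.mk_nat, hcof]
      exact Cardinal.lift_lt.2 hunc
    have hmemn : ∀ γ, γ < sSup (Set.range g) → ∃ n, γ < g n := by
      intro γ hγ
      by_contra hcon2
      push_neg at hcon2
      exact absurd hγ
        (csSup_le (Set.range_nonempty g) (by rintro x ⟨n, rfl⟩; exact hcon2 n)).not_gt
    refine ⟨sSup (Set.range g), ⟨hsκ, fun γ hγ => ?_⟩, ?_⟩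
    · obtain ⟨n, hn⟩ := hmemn γ hγ
      have hγgm : ∀ m : ℕ, γ < g (n + m) :=
        fun m => lt_of_lt_of_le hn (hgmono' n (n + m) (Nat.le_add_right n m))
      set D := Set.range (fun m : ℕ => nxt γ (g (n + m))) with hDdef
      have hDsub : D ⊆ C γ := by rintro x ⟨m, rfl⟩; exact hnxt_mem γ _ (hglt _)
      have hDne : D.Nonempty := ⟨_, Set.mem_range_self 0⟩
      have hDbdd : BddAbove D := ⟨κ, by rintro x ⟨m, rfl⟩; exact (hnxt_lt γ _ (hglt _)).le⟩
      have hDsup : sSup D = sSup (Set.range g) := by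
        apply le_antisymm
        · refine csSup_le hDne ?_
          rintro x ⟨m, rfl⟩
          refine le_trans (hstp_nxt γ (g (n + m)) (hγgm m) (hglt _)) ?_
          rw [← hgs]
          exact le_csSup hbddg (Set.mem_range_self (n + m + 1))
        · refine csSup_le (Set.range_nonempty g) ?_
          rintro x ⟨m, rfl⟩
          refine le_trans (le_trans (hgmono' m (n + m) (Nat.le_add_left m n)) ?_)
            (le_csSup hDbdd (Set.mem_range_self m))
          exact (hnxt_gt γ _ (hglt _)).le
      have hmem := (hC γ).2.1 D hDsub hDne (by rw [hDsup]; exact hsκ)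
      rwa [hDsup] at hmem
    · refine lt_of_lt_of_le ?_ (le_csSup hbddg (Set.mem_range_self 0))
      rw [hg0, Ordinal.add_one_eq_succ]
      exact Order.lt_succ β
  have hΔclub : IsClubIn κ Δ := ⟨fun x hx => hx.1, hΔclosed, fun β hβ => by
    obtain ⟨s, hs, hβs⟩ := hΔunb β hβ; exact ⟨s, hs, hβs⟩⟩
  obtain ⟨α, hαS, hαΔ⟩ := hS.2 Δ hΔclub
  exact hCne (f α) α hαS rfl (hαΔ.2 (f α) (hf α hαS))

private lemma code_inj {β θ : Ordinal.{0}}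
    (r₁ r₂ : Ordinal.{0} × Ordinal.{0} → Option Ordinal.{0})
    (h₁s : ∀ x, r₁ x ≠ none → x.1 < β ∧ x.2 < θ)
    (h₂s : ∀ x, r₂ x ≠ none → x.1 < β ∧ x.2 < θ)
    (h₁v : ∀ x v, r₁ x = some v → v < β)
    (h₂v : ∀ x v, r₂ x = some v → v < β)
    (h : {y : ↥(Set.Iio β) × ↥(Set.Iio θ) × ↥(Set.Iio β) | r₁ (y.1.1, y.2.1.1) = some y.2.2.1}
       = {y : ↥(Set.Iio β) × ↥(Set.Iio θ) × ↥(Set.Iio β) | r₂ (y.1.1, y.2.1.1) = some y.2.2.1}) :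
    r₁ = r₂ := by
  have key : ∀ (s₁ s₂ : Ordinal.{0} × Ordinal.{0} → Option Ordinal.{0}),
      (∀ x, s₁ x ≠ none → x.1 < β ∧ x.2 < θ) → (∀ x v, s₁ x = some v → v < β) →
      ({y : ↥(Set.Iio β) × ↥(Set.Iio θ) × ↥(Set.Iio β) | s₁ (y.1.1, y.2.1.1) = some y.2.2.1}
        = {y : ↥(Set.Iio β) × ↥(Set.Iio θ) × ↥(Set.Iio β) | s₂ (y.1.1, y.2.1.1) = some y.2.2.1}) →
      ∀ x v, s₁ x = some v → s₂ x = some v := by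
    intro s₁ s₂ hs hv heq x v hx
    have hsx := hs x (by rw [hx]; exact Option.some_ne_none v)
    have hvx := hv x v hx
    have hy : (⟨⟨x.1, hsx.1⟩, ⟨x.2, hsx.2⟩, ⟨v, hvx⟩⟩ :
        ↥(Set.Iio β) × ↥(Set.Iio θ) × ↥(Set.Iio β)) ∈
        {y : ↥(Set.Iio β) × ↥(Set.Iio θ) × ↥(Set.Iio β) | s₁ (y.1.1, y.2.1.1) = some y.2.2.1} := by
      show s₁ (x.1, x.2) = some v
      rwa [Prod.mk.eta]
    rw [heq] at hy
    have := hy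
    rwa [Set.mem_setOf_eq, Prod.mk.eta] at this
  funext x
  cases hx : r₁ x with
  | none =>
    cases hx2 : r₂ x with
    | none => rfl
    | some v =>
      rw [key r₂ r₁ h₂s h₂v h.symm x v hx2] at hx
      exact absurd hx (by simp)
  | some v => exact (key r₁ r₂ h₁s h₁v h x v hx).symm

/-- Let `κ` be strongly inaccessible, `θ < κ` regular, `Q = Levy(θ,<κ)`,
`p ∈ Q`, `S ⊆ κ` stationary consisting of ordinals of cofinality `≥ θ`, and
`(q_α)_{α ∈ S}` conditions with `q_α ≤ p`.  Then there are `β < κ`, a condition `q` with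
domain contained in `β × θ` and a stationary `S' ⊆ S` such that `q ≤ p` and
`π_α(q_α) = q` for all `α ∈ S'`. -/
theorem statement18 (κ θ : Ordinal.{0})
    (hκreg : κ.card.IsRegular) (hκsl : κ.card.IsStrongLimit) (hκord : κ.card.ord = κ)
    (hθreg : θ.card.IsRegular) (hθord : θ.card.ord = θ) (hθκ : θ < κ)
    (S : Set Ordinal.{0}) (hS : IsStationaryIn κ S)
    (hScof : ∀ α ∈ S, θ.card ≤ Ordinal.cof α)
    (p : LevyCond κ θ) (qs : Ordinal.{0} → LevyCond κ θ)
    (hqs : ∀ α ∈ S, LevyLE (qs α) p) :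
    ∃ β < κ, ∃ q : LevyCond κ θ,
      (∀ x : Ordinal.{0} × Ordinal.{0}, q.f x ≠ none → x.1 < β) ∧
      LevyLE q p ∧
      ∃ S' : Set Ordinal.{0}, S' ⊆ S ∧ IsStationaryIn κ S' ∧
        ∀ α ∈ S', levyRestrict α (qs α) = q.f := by
  classical
  have hθℵ : Cardinal.aleph0 ≤ θ.card := hθreg.aleph0_le
  have hθκc : θ.card < κ.card := Cardinal.lt_ord.1 (by rw [hκord]; exact hθκ)
  have hκℵ : Cardinal.aleph0 < κ.card := lt_of_le_of_lt hθℵ hθκc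
  have hκlim : Order.IsSuccLimit κ := by rw [← hκord]; exact Cardinal.isSuccLimit_ord hκreg.aleph0_le
  set b : Ordinal → Ordinal :=
    fun α => sSup {γ | γ < α ∧ ∃ ξ, (qs α).f (γ, ξ) ≠ none} + 1 with hbdef
  have hbspec : ∀ α ∈ S, b α < α ∧
      ∀ x : Ordinal × Ordinal, (qs α).f x ≠ none → x.1 < α → x.1 < b α := by
    intro α hα
    have hαlim : Order.IsSuccLimit α := Ordinal.aleph0_le_cof.1 (le_trans hθℵ (hScof α hα))
    have hBsub : ∀ γ ∈ {γ | γ < α ∧ ∃ ξ, (qs α).f (γ, ξ) ≠ none}, γ < α := fun γ hγ => hγ.1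
    have hcard : Cardinal.mk ↥{γ | γ < α ∧ ∃ ξ, (qs α).f (γ, ξ) ≠ none}
        < Cardinal.lift.{1,0} α.cof := by
      have hinj : Cardinal.mk ↥{γ | γ < α ∧ ∃ ξ, (qs α).f (γ, ξ) ≠ none}
          ≤ Cardinal.mk {x : Ordinal × Ordinal // (qs α).f x ≠ none} := by
        refine Cardinal.mk_le_of_injective
          (f := fun z => ⟨(z.1, z.2.2.choose), z.2.2.choose_spec⟩) ?_
        intro z w hzw
        apply Subtype.ext
        exact congrArg (fun t => (t : {x : Ordinal × Ordinal // (qs α).f x ≠ none}).1.1) hzw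
      exact lt_of_lt_of_le (lt_of_le_of_lt hinj (qs α).dom_small)
        (Cardinal.lift_le.2 (hScof α hα))
    have hsup := sSup_lt_of_card_lt_cof hBsub hcard
    constructor
    · rw [hbdef]; simp only
      rw [Ordinal.add_one_eq_succ]
      exact hαlim.succ_lt hsup
    · intro x hx hxα
      have hxB : x.1 ∈ {γ | γ < α ∧ ∃ ξ, (qs α).f (γ, ξ) ≠ none} :=
        ⟨hxα, ⟨x.2, by rwa [Prod.mk.eta]⟩⟩
      have hle : x.1 ≤ sSup {γ | γ < α ∧ ∃ ξ, (qs α).f (γ, ξ) ≠ none} :=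
        le_csSup ⟨α, fun g hg => (hg.1).le⟩ hxB
      rw [hbdef]; simp only
      rw [Ordinal.add_one_eq_succ]
      exact lt_of_le_of_lt hle (Order.lt_succ _)
  obtain ⟨β, hS₁⟩ := fodor hκreg hκℵ hκord hS b (fun α hα => (hbspec α hα).1)
  set S₁ := {α | α ∈ S ∧ b α = β} with hS₁def
  obtain ⟨α₁, hα₁⟩ := stat_nonempty hκlim hS₁
  have hβpos : 0 < β := by
    rw [← hα₁.2, hbdef]
    simp only
    rw [Ordinal.add_one_eq_succ]
    exact lt_of_le_of_lt (zero_le (a := sSup _)) (Order.lt_succ _)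
  have hβκ : β < κ := by
    rw [← hα₁.2]
    exact lt_trans (hbspec α₁ hα₁.1).1 (hS.1 hα₁.1)
  have hrsupp : ∀ α ∈ S, ∀ x : Ordinal × Ordinal,
      levyRestrict β (qs α) x ≠ none → x.1 < β ∧ x.2 < θ := by
    intro α _ x hx
    simp only [levyRestrict] at hx
    split_ifs at hx with h
    · exact ⟨h, ((qs α).dom_lt x hx).2⟩
    · exact absurd rfl hx
  have hrval : ∀ α ∈ S, ∀ (x : Ordinal × Ordinal) (v : Ordinal),
      levyRestrict β (qs α) x = some v → v < β := by
    intro α _ x v hx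
    simp only [levyRestrict] at hx
    split_ifs at hx with h
    · rcases lt_or_ge 1 x.1 with h1 | h1
      · exact lt_trans ((qs α).val_lt x v hx h1) h
      · rw [(qs α).val_zero x v hx h1]; exact hβpos
  have hreq : ∀ α ∈ S₁, β < α → levyRestrict α (qs α) = levyRestrict β (qs α) := by
    intro α hα hβα
    funext x
    simp only [levyRestrict]
    by_cases h : x.1 < β
    · rw [if_pos h, if_pos (lt_trans h hβα)]
    · rw [if_neg h]
      split_ifs with h2
      · by_contra hne
        exact h (by rw [← hα.2]; exact (hbspec α hα.1).2 x hne h2)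
      · rfl
  set c : Cardinal.{0} := β.card * (θ.card * β.card) with hcdef
  have hβκc : β.card < κ.card := Cardinal.lt_ord.1 (by rw [hκord]; exact hβκ)
  have hcκ : c < κ.card :=
    Cardinal.mul_lt_of_lt hκreg.aleph0_le hβκc
      (Cardinal.mul_lt_of_lt hκreg.aleph0_le hθκc hβκc)
  have hμκ : (2 : Cardinal.{0}) ^ c < κ.card := hκsl.two_power_lt hcκ
  set lam : Ordinal := ((2 : Cardinal.{0}) ^ c).ord with hlamdef
  have hlamκ : lam < κ := by rw [hlamdef, ← hκord]; exact Cardinal.ord_lt_ord.2 hμκ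
  have hle : Cardinal.mk (Set (↥(Set.Iio β) × ↥(Set.Iio θ) × ↥(Set.Iio β)))
      ≤ Cardinal.mk ↥(Set.Iio lam) := by
    have hX : Cardinal.mk (↥(Set.Iio β) × ↥(Set.Iio θ) × ↥(Set.Iio β))
        = Cardinal.lift.{1,0} c := by
      rw [Cardinal.mk_prod, Cardinal.mk_prod]
      simp only [Ordinal.mk_Iio_ordinal, Cardinal.lift_id]
      rw [hcdef, Cardinal.lift_mul, Cardinal.lift_mul]
    rw [Cardinal.mk_set, hX, Ordinal.mk_Iio_ordinal, hlamdef, Cardinal.card_ord,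
      Cardinal.lift_two_power]
  obtain ⟨J⟩ := Cardinal.le_def _ _ |>.1 hle
  set f2 : Ordinal → Ordinal :=
    fun α => (J {y : ↥(Set.Iio β) × ↥(Set.Iio θ) × ↥(Set.Iio β) |
      levyRestrict β (qs α) (y.1.1, y.2.1.1) = some y.2.2.1} : Ordinal) with hf2def
  have hf2lt : ∀ α, f2 α < lam := fun α => (J _).2
  have hS₂ : IsStationaryIn κ (S₁ ∩ Set.Ioi (max lam β)) :=
    stat_Ioi hS₁ (max_lt hlamκ hβκ)
  obtain ⟨δ, hS'⟩ := fodor hκreg hκℵ hκord hS₂ f2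
    (fun α hα => lt_trans (lt_of_lt_of_le (hf2lt α) (le_max_left _ _)) hα.2)
  set S' := {α | α ∈ S₁ ∩ Set.Ioi (max lam β) ∧ f2 α = δ} with hS'def
  obtain ⟨α₀, hα₀⟩ := stat_nonempty hκlim hS'
  have hS'S : S' ⊆ S := fun α hα => hα.1.1.1
  have hconst : ∀ α ∈ S', levyRestrict β (qs α) = levyRestrict β (qs α₀) := by
    intro α hα
    have hJ : J {y : ↥(Set.Iio β) × ↥(Set.Iio θ) × ↥(Set.Iio β) |
          levyRestrict β (qs α) (y.1.1, y.2.1.1) = some y.2.2.1}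
        = J {y : ↥(Set.Iio β) × ↥(Set.Iio θ) × ↥(Set.Iio β) |
          levyRestrict β (qs α₀) (y.1.1, y.2.1.1) = some y.2.2.1} :=
      Subtype.ext (hα.2.trans hα₀.2.symm)
    exact code_inj _ _ (hrsupp α (hS'S hα)) (hrsupp α₀ (hS'S hα₀))
      (hrval α (hS'S hα)) (hrval α₀ (hS'S hα₀)) (J.injective hJ)
  have hfinal : ∀ α ∈ S', levyRestrict α (qs α) = levyRestrict β (qs α₀) := by
    intro α hα
    exact (hreq α hα.1.1 (lt_of_le_of_lt (le_max_right lam β) hα.1.2)).trans (hconst α hα)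
  have hnn : ∀ x : Ordinal × Ordinal,
      levyRestrict β (qs α₀) x ≠ none → (qs α₀).f x ≠ none := by
    intro x hx
    simp only [levyRestrict] at hx
    split_ifs at hx with h
    · exact hx
    · exact absurd rfl hx
  have hsome : ∀ (x : Ordinal × Ordinal) (v : Ordinal),
      levyRestrict β (qs α₀) x = some v → (qs α₀).f x = some v := by
    intro x v hx
    simp only [levyRestrict] at hx
    split_ifs at hx with h
    · exact hx
  refine ⟨β, hβκ, ⟨levyRestrict β (qs α₀), ?_, ?_, ?_, ?_⟩, ?_, ?_, S', hS'S, hS', ?_⟩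
  · intro x hx
    exact ⟨lt_trans (hrsupp α₀ (hS'S hα₀) x hx).1 hβκ, (hrsupp α₀ (hS'S hα₀) x hx).2⟩
  · refine lt_of_le_of_lt ?_ (qs α₀).dom_small
    refine Cardinal.mk_le_of_injective (f := fun z => ⟨z.1, hnn z.1 z.2⟩) ?_
    intro z w h
    have h2 := congrArg
      (Subtype.val : {x : Ordinal × Ordinal // (qs α₀).f x ≠ none} → Ordinal × Ordinal) h
    exact Subtype.ext h2
  · intro x v hx h1
    exact (qs α₀).val_lt x v (hsome x v hx) h1
  · intro x v hx h1
    exact (qs α₀).val_zero x v (hsome x v hx) h1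
  · intro x hx
    simp only [levyRestrict] at hx
    split_ifs at hx with h
    · exact h
    · exact absurd rfl hx
  · intro x v hpv
    have hx1 : x.1 < κ := (p.dom_lt x (by rw [hpv]; exact Option.some_ne_none v)).1
    obtain ⟨α, hα⟩ := stat_nonempty hκlim (stat_Ioi hS' hx1)
    have h1 : levyRestrict α (qs α) x = some v := by
      simp only [levyRestrict]
      rw [if_pos (show x.1 < α from hα.2)]
      exact hqs α (hS'S hα.1) x v hpv
    show levyRestrict β (qs α₀) x = some v
    rw [← hfinal α hα.1]
    exact h1
  · intro α hα
    exact hfinal α hα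

end BMPDGames
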